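/- For each positive integer q and sample size n, the distribution of the statistic D_q(F_n, F) is the same for every continuous distribution function F, where F_n is the empirical distribution function of n i.i.d. samples from F. -/

import Mathlib

open Filter Set

/-- A distribution function on ℝ: nondecreasing, right-continuous,
with limit 0 at -∞ and limit 1 at ∞. -/
def IsDistFun (F : ℝ → ℝ) : Prop :=
  Monotone F ∧ (∀ x, ContinuousWithinAt F (Set.Ici x) x) ∧
  Tendsto F atBot (nhds 0) ∧ Tendsto F atTop (nhds 1)

/-- Extended evaluation: index 0 ↦ F(-∞)=0, index q+1 ↦ F(∞)=1,
indices 1..q ↦ F(vᵢ). -/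
noncomputable def dext (q : ℕ) (F : ℝ → ℝ) (v : ℕ → ℝ) : ℕ → ℝ := fun i =>
  if i = 0 then 0 else if i = q + 1 then 1 else F (v i)

/-- r_{F,G}(v) = Σ_{i=0}^{q} min{F|_{vᵢ}^{vᵢ₊₁}, G|_{vᵢ}^{vᵢ₊₁}}. -/
noncomputable def rFG (q : ℕ) (F G : ℝ → ℝ) (v : ℕ → ℝ) : ℝ :=
  ∑ i ∈ Finset.range (q + 1),
    min (dext q F v (i + 1) - dext q F v i) (dext q G v (i + 1) - dext q G v i)

/-- The statistic D_q(F, G) = 1 - inf over nondecreasing v ∈ ℝ^q of r_{F,G}(v). -/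
noncomputable def Dq (q : ℕ) (F G : ℝ → ℝ) : ℝ :=
  1 - sInf {r | ∃ v : ℕ → ℝ, MonotoneOn v (Set.Icc 1 q) ∧ r = rFG q F G v}

open MeasureTheory ProbabilityTheory

/-- The standard uniform distribution function U(x) = max{0, min{x, 1}}. -/
noncomputable def Ucdf : ℝ → ℝ := fun x => max 0 (min x 1)

/-- The empirical distribution function of Y₁(ω),…,Y_n(ω). -/
noncomputable def empOf {Ω : Type*} (n : ℕ) (Y : Fin n → Ω → ℝ) (ω : Ω) : ℝ → ℝ :=
  fun x => (∑ i : Fin n, if Y i ω ≤ x then (1 : ℝ) else 0) / n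


namespace DqAux


noncomputable def empD (n : ℕ) (y : Fin n → ℝ) : ℝ → ℝ :=
  fun x => (∑ j : Fin n, if y j ≤ x then (1 : ℝ) else 0) / n

lemma empD_nonneg (n : ℕ) (y : Fin n → ℝ) (x : ℝ) : 0 ≤ empD n y x := by
  unfold empD
  apply div_nonneg _ (Nat.cast_nonneg n)
  exact Finset.sum_nonneg fun j _ => by split <;> norm_num

lemma empD_le_one {n : ℕ} (hn : 0 < n) (y : Fin n → ℝ) (x : ℝ) : empD n y x ≤ 1 := by
  unfold empD
  rw [div_le_one (by exact_mod_cast hn)]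
  calc (∑ j : Fin n, if y j ≤ x then (1:ℝ) else 0) ≤ ∑ _j : Fin n, (1:ℝ) :=
        Finset.sum_le_sum fun j _ => by split <;> norm_num
    _ = n := by simp

lemma empD_mono {n : ℕ} (y : Fin n → ℝ) : Monotone (empD n y) := by
  intro a b hab
  unfold empD
  gcongr with j hj
  split_ifs with h1 h2
  · exact le_rfl
  · exact absurd (h1.trans hab) h2
  · norm_num
  · exact le_rfl

lemma Ucdf_mono : Monotone Ucdf :=
  fun a b h => max_le_max le_rfl (min_le_min h le_rfl)

lemma Ucdf_nonneg (x : ℝ) : 0 ≤ Ucdf x := le_max_left _ _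

lemma Ucdf_le_one (x : ℝ) : Ucdf x ≤ 1 := max_le (by norm_num) (min_le_right _ _)

lemma Ucdf_eq {t : ℝ} (h0 : 0 ≤ t) (h1 : t ≤ 1) : Ucdf t = t := by
  unfold Ucdf; rw [min_eq_left h1, max_eq_right h0]

lemma clamp_sub_le {δ u a b : ℝ} (hδ0 : 0 ≤ δ) (hu1 : u ≤ 1) (hδu : δ ≤ u) (hab : a ≤ b) :
    max δ (min b u) - max δ (min a u) ≤ Ucdf b - Ucdf a := by
  unfold Ucdf
  simp only [max_def, min_def]
  split_ifs <;> linarith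



lemma dext_zero (q : ℕ) (G : ℝ → ℝ) (v : ℕ → ℝ) : dext q G v 0 = 0 := by simp [dext]

lemma dext_top (q : ℕ) (G : ℝ → ℝ) (v : ℕ → ℝ) : dext q G v (q + 1) = 1 := by
  simp [dext]

lemma dext_mid (q : ℕ) (G : ℝ → ℝ) (v : ℕ → ℝ) {i : ℕ} (h1 : 1 ≤ i) (h2 : i ≤ q) :
    dext q G v i = G (v i) := by
  have e0 : i ≠ 0 := by omega
  have e1 : i ≠ q + 1 := by omega
  simp [dext, e0, e1]

lemma dext_eq_of {q : ℕ} {G G' : ℝ → ℝ} {v v' : ℕ → ℝ}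
    (h : ∀ i, 1 ≤ i → i ≤ q → G (v i) = G' (v' i)) {i : ℕ} (hi : i ≤ q + 1) :
    dext q G v i = dext q G' v' i := by
  unfold dext
  split_ifs with h0 h1
  · rfl
  · rfl
  · exact h i (by omega) (by omega)

lemma rFG_congr {q : ℕ} {G G' H H' : ℝ → ℝ} {v v' : ℕ → ℝ}
    (hG : ∀ i, 1 ≤ i → i ≤ q → G (v i) = G' (v' i))
    (hH : ∀ i, 1 ≤ i → i ≤ q → H (v i) = H' (v' i)) :
    rFG q G H v = rFG q G' H' v' := by
  refine Finset.sum_congr rfl fun i hi => ?_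
  rw [Finset.mem_range] at hi
  rw [dext_eq_of hG (by omega), dext_eq_of hG (by omega),
    dext_eq_of hH (by omega), dext_eq_of hH (by omega)]

lemma dext_sub_nonneg {q : ℕ} (hq : 1 ≤ q) {G : ℝ → ℝ} (hG0 : ∀ x, 0 ≤ G x)
    (hG1 : ∀ x, G x ≤ 1) (hGm : Monotone G) {v : ℕ → ℝ} (hv : MonotoneOn v (Set.Icc 1 q))
    {i : ℕ} (hi : i ≤ q) : 0 ≤ dext q G v (i + 1) - dext q G v i := by
  by_cases h0 : i = 0
  · subst h0
    rw [dext_zero]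
    simp only [Nat.zero_add]
    rw [dext_mid q G v le_rfl hq]
    simpa using hG0 (v 1)
  · by_cases h2 : i = q
    · rw [h2, dext_top, dext_mid q G v hq le_rfl]
      simpa using hG1 (v q)
    · rw [dext_mid q G v (by omega) (by omega), dext_mid q G v (by omega) (by omega)]
      have := hv (a := i) (b := i + 1) (by simp [Set.mem_Icc]; omega)
        (by simp [Set.mem_Icc]; omega) (by omega)
      simpa using hGm this

lemma rFG_nonneg {q : ℕ} (hq : 1 ≤ q) {G H : ℝ → ℝ} (hG0 : ∀ x, 0 ≤ G x)
    (hG1 : ∀ x, G x ≤ 1) (hGm : Monotone G) (hH0 : ∀ x, 0 ≤ H x)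
    (hH1 : ∀ x, H x ≤ 1) (hHm : Monotone H) {v : ℕ → ℝ}
    (hv : MonotoneOn v (Set.Icc 1 q)) : 0 ≤ rFG q G H v := by
  refine Finset.sum_nonneg fun i hi => ?_
  rw [Finset.mem_range] at hi
  exact le_min (dext_sub_nonneg hq hG0 hG1 hGm hv (by omega))
    (dext_sub_nonneg hq hH0 hH1 hHm hv (by omega))


lemma empD_eq_zero {n : ℕ} {y : Fin n → ℝ} {t : ℝ} (h : ∀ j, t < y j) : empD n y t = 0 := by
  unfold empD
  rw [Finset.sum_eq_zero, zero_div]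
  intro j _
  rw [if_neg (not_le.mpr (h j))]

lemma empD_eq_one {n : ℕ} (hn : 0 < n) {y : Fin n → ℝ} {t : ℝ} (h : ∀ j, y j ≤ t) :
    empD n y t = 1 := by
  unfold empD
  rw [Finset.sum_congr rfl fun j _ => if_pos (h j)]
  simp only [Finset.sum_const, Finset.card_univ, Fintype.card_fin, nsmul_eq_mul, mul_one]
  rw [div_self]
  exact_mod_cast hn.ne'

lemma rFG_clamp {q n : ℕ} (hq : 1 ≤ q) (hn : 0 < n) (y : Fin n → ℝ) {δ u : ℝ}
    (hδ : 0 < δ) (hu : u < 1) (hδu : δ ≤ u)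
    (hyl : ∀ j, δ < y j) (hyu : ∀ j, y j < u)
    {w : ℕ → ℝ} (hw : MonotoneOn w (Set.Icc 1 q)) :
    rFG q (empD n y) Ucdf (fun i => max δ (min (w i) u)) ≤ rFG q (empD n y) Ucdf w := by
  set A := empD n y with hA
  have hclamp : ∀ t, A (max δ (min t u)) = A t := by
    intro t
    show empD n y _ = empD n y _
    unfold empD
    congr 1
    refine Finset.sum_congr rfl fun j _ => ?_
    refine if_congr ⟨fun h => ?_, fun h => ?_⟩ rfl rfl
    · by_contra ht
      push_neg at ht
      have : max δ (min t u) < y j := max_lt (hyl j) (lt_of_le_of_lt (min_le_left _ _) ht)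
      linarith
    · exact le_max_of_le_right (le_min h (le_of_lt (hyu j)))
  have hAd : ∀ i, i ≤ q + 1 →
      dext q A (fun i => max δ (min (w i) u)) i = dext q A w i :=
    fun i hi => dext_eq_of (fun i _ _ => hclamp (w i)) hi
  refine Finset.sum_le_sum fun i hi => ?_
  rw [Finset.mem_range] at hi
  rw [hAd (i+1) (by omega), hAd i (by omega)]
  have hcw0 : ∀ k : ℕ, (0:ℝ) ≤ max δ (min (w k) u) := fun k => le_trans hδ.le (le_max_left _ _)
  have hcw1 : ∀ k : ℕ, max δ (min (w k) u) ≤ 1 :=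
    fun k => le_trans (max_le hδu (min_le_right _ _)) hu.le
  by_cases h0 : i = 0
  · subst h0
    simp only [Nat.zero_add, dext_zero, sub_zero]
    rw [dext_mid q A w le_rfl hq, dext_mid q Ucdf _ le_rfl hq, dext_mid q Ucdf w le_rfl hq]
    rcases le_or_gt δ (w 1) with hd | hd
    · exact min_le_min le_rfl (Ucdf_mono (max_le hd (min_le_left _ _)))
    · have hA1 : A (w 1) = 0 := empD_eq_zero fun j => lt_trans hd (hyl j)
      rw [hA1]
      exact le_trans (min_le_left _ _) (le_min le_rfl (Ucdf_nonneg _))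
  · by_cases h2 : i = q
    · rw [h2]
      simp only [dext_top]
      rw [dext_mid q A w hq le_rfl, dext_mid q Ucdf _ hq le_rfl, dext_mid q Ucdf w hq le_rfl]
      rcases le_or_gt (w q) u with hd | hd
      · exact min_le_min le_rfl
          (sub_le_sub_left (Ucdf_mono (le_max_of_le_right (le_min le_rfl hd))) 1)
      · have hA1 : A (w q) = 1 := empD_eq_one hn fun j => le_of_lt (lt_trans (hyu j) hd)
        rw [hA1]
        refine le_trans (min_le_left _ _) (le_min le_rfl ?_)
        rw [sub_self]
        exact sub_nonneg.mpr (Ucdf_le_one _)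
    · have h1i : 1 ≤ i := by omega
      have hiq : i + 1 ≤ q := by omega
      rw [dext_mid q A w (by omega) hiq, dext_mid q A w h1i (by omega),
        dext_mid q Ucdf _ (by omega) hiq, dext_mid q Ucdf _ h1i (by omega),
        dext_mid q Ucdf w (by omega) hiq, dext_mid q Ucdf w h1i (by omega)]
      refine min_le_min le_rfl ?_
      rw [Ucdf_eq (hcw0 (i+1)) (hcw1 (i+1)), Ucdf_eq (hcw0 i) (hcw1 i)]
      exact clamp_sub_le hδ.le hu.le hδu
        (hw (by simp [Set.mem_Icc]; omega) (by simp [Set.mem_Icc]; omega) (by omega))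

section FProps

variable {F : ℝ → ℝ} (hmono : Monotone F) (hcont : Continuous F)
  (h0 : ∀ x, 0 ≤ F x) (h1 : ∀ x, F x ≤ 1)
  (hbot : ∀ c : ℝ, 0 < c → ∃ t, F t < c) (htop : ∀ c : ℝ, 0 ≤ c → c < 1 → ∃ t, c < F t)

include hbot in
lemma level_nonempty {c : ℝ} (hc : 0 < c) : {t | F t ≤ c}.Nonempty := by
  obtain ⟨t, ht⟩ := hbot c hc
  exact ⟨t, ht.le⟩

include hmono htop in
lemma level_bddAbove {c : ℝ} (h0c : 0 ≤ c) (hc : c < 1) : BddAbove {t | F t ≤ c} := by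
  obtain ⟨T, hT⟩ := htop c h0c hc
  refine ⟨T, fun t ht => ?_⟩
  by_contra h
  push_neg at h
  exact absurd (le_trans (hmono h.le) ht) (not_le.mpr hT)

include hmono hcont hbot htop in
lemma F_csSup_level {c : ℝ} (hc0 : 0 < c) (hc1 : c < 1) :
    F (sSup {t | F t ≤ c}) = c := by
  have hne := level_nonempty hbot hc0
  have hbdd := level_bddAbove hmono htop hc0.le hc1
  have hcl : IsClosed {t | F t ≤ c} := isClosed_le hcont continuous_const
  have hmem := hcl.csSup_mem hne hbdd
  refine le_antisymm hmem ?_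
  by_contra hlt
  push_neg at hlt
  have hopen : IsOpen (F ⁻¹' Iio c) := isOpen_Iio.preimage hcont
  obtain ⟨ε, hε, hball⟩ := Metric.isOpen_iff.mp hopen _ hlt
  have : sSup {t | F t ≤ c} + ε / 2 ∈ F ⁻¹' Iio c := by
    apply hball
    rw [Metric.mem_ball, Real.dist_eq]
    rw [abs_of_nonneg (by linarith)]
    ring_nf
    linarith
  have hmem2 : F (sSup {t | F t ≤ c} + ε / 2) ≤ c := le_of_lt this
  have : sSup {t | F t ≤ c} + ε / 2 ≤ sSup {t | F t ≤ c} := le_csSup hbdd hmem2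
  linarith

include hmono hcont h0 h1 hbot htop in
lemma sInf_SX_eq {q n : ℕ} (hq : 1 ≤ q) (hn : 0 < n) (x : Fin n → ℝ)
    (hg1 : ∀ j, 0 < F (x j)) (hg2 : ∀ j, F (x j) < 1)
    (hg3 : ∀ j t, F (x j) ≤ F t → x j ≤ t) :
    sInf {r | ∃ v : ℕ → ℝ, MonotoneOn v (Set.Icc 1 q) ∧ r = rFG q (empD n x) F v}
      = sInf {r | ∃ v : ℕ → ℝ, MonotoneOn v (Set.Icc 1 q) ∧
          r = rFG q (empD n (fun j => F (x j))) Ucdf v} := by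
  set SX := {r | ∃ v : ℕ → ℝ, MonotoneOn v (Set.Icc 1 q) ∧ r = rFG q (empD n x) F v} with hSX
  set SY := {r | ∃ v : ℕ → ℝ, MonotoneOn v (Set.Icc 1 q) ∧
      r = rFG q (empD n (fun j => F (x j))) Ucdf v} with hSY
  have hXne : SX.Nonempty := ⟨_, (fun _ => (0:ℝ)), monotoneOn_const, rfl⟩
  have hYne : SY.Nonempty := ⟨_, (fun _ => (0:ℝ)), monotoneOn_const, rfl⟩
  have hXbdd : BddBelow SX := by
    refine ⟨0, ?_⟩
    rintro r ⟨v, hv, rfl⟩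
    exact rFG_nonneg hq (empD_nonneg n x) (empD_le_one hn x) (empD_mono x) h0 h1 hmono hv
  have hYbdd : BddBelow SY := by
    refine ⟨0, ?_⟩
    rintro r ⟨v, hv, rfl⟩
    exact rFG_nonneg hq (empD_nonneg n _) (empD_le_one hn _) (empD_mono _)
      Ucdf_nonneg Ucdf_le_one Ucdf_mono hv
  refine le_antisymm ?_ ?_
  · -- sInf SX ≤ sInf SY : quantile direction
    refine le_csInf hYne ?_
    rintro r ⟨w, hw, rfl⟩
    haveI : Nonempty (Fin n) := ⟨⟨0, hn⟩⟩
    have hFinN : (Finset.univ : Finset (Fin n)).Nonempty := Finset.univ_nonempty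
    set m := Finset.univ.inf' hFinN (fun j => F (x j)) with hm
    set M := Finset.univ.sup' hFinN (fun j => F (x j)) with hM
    have hm0 : 0 < m := by
      rw [hm, Finset.lt_inf'_iff]
      exact fun j _ => hg1 j
    have hM1 : M < 1 := by
      rw [hM, Finset.sup'_lt_iff]
      exact fun j _ => hg2 j
    have hmM : m ≤ M := by
      obtain ⟨j0⟩ : Nonempty (Fin n) := ⟨⟨0, hn⟩⟩
      rw [hm, hM]
      exact le_trans (Finset.inf'_le _ (Finset.mem_univ j0))
        (Finset.le_sup' (fun j => F (x j)) (Finset.mem_univ j0))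
    set δ := m / 2 with hδdef
    set u := (M + 1) / 2 with hudef
    have hδ : 0 < δ := by rw [hδdef]; linarith
    have hu : u < 1 := by rw [hudef]; linarith
    have hδu : δ ≤ u := by rw [hδdef, hudef]; linarith
    have hyl : ∀ j, δ < F (x j) := fun j => by
      have : m ≤ F (x j) := Finset.inf'_le _ (Finset.mem_univ j)
      rw [hδdef]; linarith
    have hyu : ∀ j, F (x j) < u := fun j => by
      have : F (x j) ≤ M := by rw [hM]; exact Finset.le_sup' (fun j => F (x j)) (Finset.mem_univ j)
      rw [hudef]; linarith
    set cw := fun i : ℕ => max δ (min (w i) u) with hcw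
    have hcwl : ∀ i, δ ≤ cw i := fun i => le_max_left _ _
    have hcwu : ∀ i, cw i ≤ u := fun i => max_le hδu (min_le_right _ _)
    have hcw0 : ∀ i, 0 < cw i := fun i => lt_of_lt_of_le hδ (hcwl i)
    have hcw1 : ∀ i, cw i < 1 := fun i => lt_of_le_of_lt (hcwu i) hu
    set v := fun i : ℕ => sSup {t | F t ≤ cw i} with hv
    have hFv : ∀ i, F (v i) = cw i := fun i => F_csSup_level hmono hcont hbot htop (hcw0 i) (hcw1 i)
    have hxv : ∀ (j : Fin n) (i : ℕ), x j ≤ v i ↔ F (x j) ≤ cw i := by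
      intro j i
      constructor
      · intro h
        calc F (x j) ≤ F (v i) := hmono h
          _ = cw i := hFv i
      · intro h
        exact le_csSup (level_bddAbove hmono htop (hcw0 i).le (hcw1 i)) h
    have hvmono : MonotoneOn v (Set.Icc 1 q) := by
      intro a ha b hb hab
      refine csSup_le_csSup (level_bddAbove hmono htop (hcw0 b).le (hcw1 b))
        (level_nonempty hbot (hcw0 a)) ?_
      intro t ht
      simp only [Set.mem_setOf_eq] at ht ⊢
      refine le_trans ht ?_
      exact max_le_max le_rfl (min_le_min (hw ha hb hab) le_rfl)
    have step1 : sInf SX ≤ rFG q (empD n x) F v := csInf_le hXbdd ⟨v, hvmono, rfl⟩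
    have step2 : rFG q (empD n x) F v = rFG q (empD n (fun j => F (x j))) Ucdf cw := by
      refine rFG_congr (fun i hi1 hi2 => ?_) (fun i hi1 hi2 => ?_)
      · unfold empD
        congr 1
        refine Finset.sum_congr rfl fun j _ => ?_
        exact if_congr (hxv j i) rfl rfl
      · rw [hFv i, Ucdf_eq (hcw0 i).le (hcw1 i).le]
    have step3 : rFG q (empD n (fun j => F (x j))) Ucdf cw
        ≤ rFG q (empD n (fun j => F (x j))) Ucdf w :=
      rFG_clamp hq hn _ hδ hu hδu hyl hyu hw
    calc sInf SX ≤ _ := step1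
      _ = _ := step2
      _ ≤ _ := step3
  · -- sInf SY ≤ sInf SX : direct substitution
    refine csInf_le_csInf hYbdd hXne ?_
    rintro r ⟨v, hv, rfl⟩
    refine ⟨fun i => F (v i), fun a ha b hb hab => hmono (hv ha hb hab), ?_⟩
    refine rFG_congr (fun i hi1 hi2 => ?_) (fun i hi1 hi2 => ?_)
    · unfold empD
      congr 1
      refine Finset.sum_congr rfl fun j _ => ?_
      refine if_congr ⟨fun h => hmono h, fun h => hg3 j (v i) h⟩ rfl rfl
    · exact (Ucdf_eq (h0 (v i)) (h1 (v i))).symm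

end FProps

section MeasSide

open MeasureTheory

variable {μ : Measure ℝ} [IsProbabilityMeasure μ] {F : ℝ → ℝ}
  (hFcdf : ∀ x, F x = (μ (Set.Iic x)).toReal) (hFcont : Continuous F)

include hFcdf

lemma F_mono' : Monotone F := by
  intro a b hab
  rw [hFcdf a, hFcdf b]
  exact ENNReal.toReal_mono (measure_ne_top μ _) (measure_mono (Iic_subset_Iic.mpr hab))

lemma F_nonneg' (x : ℝ) : 0 ≤ F x := by rw [hFcdf x]; exact ENNReal.toReal_nonneg

lemma F_le_one' (x : ℝ) : F x ≤ 1 := by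
  rw [hFcdf x]
  have h := prob_le_one (μ := μ) (s := Set.Iic x)
  rw [← ENNReal.ofReal_one] at h
  exact le_trans (ENNReal.toReal_le_of_le_ofReal zero_le_one h) le_rfl

lemma measure_Iic_eq' (b : ℝ) : μ (Set.Iic b) = ENNReal.ofReal (F b) := by
  rw [hFcdf b, ENNReal.ofReal_toReal (measure_ne_top μ _)]

lemma F_bot' (c : ℝ) (hc : 0 < c) : ∃ t, F t < c := by
  have htend := tendsto_measure_Ici_atBot μ
  rw [measure_univ] at htend
  have hlt : (1 : ENNReal) - ENNReal.ofReal (c / 2) < 1 :=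
    ENNReal.sub_lt_self ENNReal.one_ne_top one_ne_zero
      (by simp [ENNReal.ofReal_eq_zero]; linarith)
  obtain ⟨x, hx⟩ := (htend.eventually (eventually_gt_nhds hlt)).exists
  refine ⟨x - 1, ?_⟩
  have hsub : Set.Iic (x - 1) ⊆ (Set.Ici x)ᶜ := by
    intro t ht
    simp only [Set.mem_compl_iff, Set.mem_Ici, not_le]
    simp only [Set.mem_Iic] at ht
    linarith
  have h2 : μ (Set.Iic (x - 1)) ≤ 1 - μ (Set.Ici x) := by
    refine le_trans (measure_mono hsub) ?_
    rw [measure_compl measurableSet_Ici (measure_ne_top μ _), measure_univ]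
  have h3 : 1 - μ (Set.Ici x) ≤ ENNReal.ofReal (c / 2) :=
    tsub_le_iff_right.mpr (tsub_le_iff_left.mp hx.le)
  have : μ (Set.Iic (x - 1)) ≤ ENNReal.ofReal (c / 2) := le_trans h2 h3
  rw [hFcdf]
  calc (μ (Set.Iic (x-1))).toReal ≤ (ENNReal.ofReal (c/2)).toReal :=
        ENNReal.toReal_mono ENNReal.ofReal_ne_top this
    _ = c / 2 := ENNReal.toReal_ofReal (by linarith)
    _ < c := by linarith

lemma F_top' (c : ℝ) (h0c : 0 ≤ c) (hc : c < 1) : ∃ t, c < F t := by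
  have htend := tendsto_measure_Iic_atTop μ
  rw [measure_univ] at htend
  have hlt : ENNReal.ofReal c < 1 := by
    rw [← ENNReal.ofReal_one]
    exact ENNReal.ofReal_lt_ofReal_iff_of_nonneg h0c |>.mpr hc
  obtain ⟨T, hT⟩ := (htend.eventually (eventually_gt_nhds hlt)).exists
  refine ⟨T, ?_⟩
  rw [hFcdf]
  have := ENNReal.toReal_lt_toReal (ENNReal.ofReal_ne_top) (measure_ne_top μ (Set.Iic T)) |>.mpr hT
  rwa [ENNReal.toReal_ofReal h0c] at this

include hFcont in
lemma null_N0' : μ {x | F x ≤ 0} = 0 := by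
  rcases Set.eq_empty_or_nonempty {x | F x ≤ 0} with he | hne
  · rw [he]; exact measure_empty
  · obtain ⟨T, hT⟩ := F_top' hFcdf (1/2) (by norm_num) (by norm_num)
    have hbdd : BddAbove {x | F x ≤ 0} := by
      refine ⟨T, fun t ht => ?_⟩
      simp only [Set.mem_setOf_eq] at ht
      by_contra h
      push_neg at h
      have := F_mono' hFcdf h.le
      linarith
    have hcl : IsClosed {x | F x ≤ 0} := isClosed_le hFcont continuous_const
    have hmem := hcl.csSup_mem hne hbdd
    simp only [Set.mem_setOf_eq] at hmem
    have hsub : {x | F x ≤ 0} ⊆ Set.Iic (sSup {x | F x ≤ 0}) := fun t ht => le_csSup hbdd ht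
    refine measure_mono_null hsub ?_
    rw [measure_Iic_eq' hFcdf]
    exact ENNReal.ofReal_eq_zero.mpr hmem

include hFcont in
lemma null_N1' : μ {x | 1 ≤ F x} = 0 := by
  rcases Set.eq_empty_or_nonempty {x | 1 ≤ F x} with he | hne
  · rw [he]; exact measure_empty
  · obtain ⟨t0, ht0⟩ := F_bot' hFcdf (1/2) (by norm_num)
    have hbdd : BddBelow {x | 1 ≤ F x} := by
      refine ⟨t0, fun t ht => ?_⟩
      simp only [Set.mem_setOf_eq] at ht
      by_contra h
      push_neg at h
      have := F_mono' hFcdf h.le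
      linarith
    have hcl : IsClosed {x | 1 ≤ F x} := isClosed_le continuous_const hFcont
    have hmem := hcl.csInf_mem hne hbdd
    simp only [Set.mem_setOf_eq] at hmem
    set b := sInf {x | 1 ≤ F x} with hb
    have hFb : F b = 1 := le_antisymm (F_le_one' hFcdf b) hmem
    have hsub : {x | 1 ≤ F x} ⊆ Set.Ici b := fun t ht => csInf_le hbdd ht
    refine measure_mono_null hsub ?_
    have key : ∀ ε : ℝ, 0 < ε → μ (Set.Ici b) ≤ ENNReal.ofReal ε := by
      intro ε hε
      rcases le_or_gt ε 1 with hε1 | hε1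
      · obtain ⟨δ, hδ, hδε⟩ := Metric.continuousAt_iff.mp (hFcont.continuousAt (x := b)) ε hε
        set a := b - δ / 2 with ha
        have hab : a < b := by rw [ha]; linarith
        have hFa : 1 - ε < F a := by
          have : dist a b < δ := by
            rw [Real.dist_eq, ha, abs_of_nonpos (by linarith)]
            linarith
          have := hδε this
          rw [Real.dist_eq, hFb] at this
          have := abs_lt.mp this
          linarith [this.1]
        have hsub2 : Set.Ici b ⊆ (Set.Iic a)ᶜ := by
          intro t ht
          simp only [Set.mem_compl_iff, Set.mem_Iic, not_le]
          simp only [Set.mem_Ici] at ht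
          linarith
        refine le_trans (measure_mono hsub2) ?_
        rw [measure_compl measurableSet_Iic (measure_ne_top μ _), measure_univ,
          measure_Iic_eq' hFcdf]
        refine tsub_le_iff_right.mpr ?_
        rw [← ENNReal.ofReal_add hε.le (by linarith : (0:ℝ) ≤ F a)]
        rw [← ENNReal.ofReal_one]
        exact ENNReal.ofReal_le_ofReal (by linarith)
      · refine le_trans prob_le_one ?_
        rw [← ENNReal.ofReal_one]
        exact ENNReal.ofReal_le_ofReal hε1.le
    by_contra hpos
    obtain ⟨ε, hε0, hεlt⟩ : ∃ ε : ℝ, 0 < ε ∧ ENNReal.ofReal ε < μ (Set.Ici b) := by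
      have h0 : 0 < μ (Set.Ici b) := pos_iff_ne_zero.mpr hpos
      obtain ⟨r, hr0, hrlt⟩ := exists_between h0
      refine ⟨r.toReal, ?_, ?_⟩
      · exact ENNReal.toReal_pos hr0.ne' (ne_top_of_lt hrlt)
      · rwa [ENNReal.ofReal_toReal (ne_top_of_lt hrlt)]
    exact absurd (key _ hε0) (not_le.mpr hεlt)

include hFcont in
lemma null_flat' (s : ℚ) : μ (Set.Ioi (s:ℝ) ∩ F ⁻¹' {F s}) = 0 := by
  rcases le_or_gt (F s) 0 with h0 | h0
  · refine measure_mono_null ?_ (null_N0' hFcdf hFcont)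
    rintro x ⟨_, hx⟩
    simp only [Set.mem_preimage, Set.mem_singleton_iff] at hx
    simp only [Set.mem_setOf_eq]
    rw [hx]; exact h0
  rcases le_or_gt 1 (F s) with h1 | h1
  · refine measure_mono_null ?_ (null_N1' hFcdf hFcont)
    rintro x ⟨_, hx⟩
    simp only [Set.mem_preimage, Set.mem_singleton_iff] at hx
    simp only [Set.mem_setOf_eq]
    rw [hx]; exact h1
  · set b := sSup {t | F t ≤ F s} with hb
    have hFb : F b = F s :=
      F_csSup_level (F_mono' hFcdf) hFcont (F_bot' hFcdf) (F_top' hFcdf) h0 h1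
    have hsb : (s:ℝ) ≤ b :=
      le_csSup (level_bddAbove (F_mono' hFcdf) (F_top' hFcdf) h0.le h1) (le_refl (F s))
    have hsub : Set.Ioi (s:ℝ) ∩ F ⁻¹' {F s} ⊆ Set.Ioc (s:ℝ) b := by
      rintro x ⟨hx1, hx2⟩
      simp only [Set.mem_preimage, Set.mem_singleton_iff] at hx2
      refine ⟨hx1, ?_⟩
      exact le_csSup (level_bddAbove (F_mono' hFcdf) (F_top' hFcdf) h0.le h1) hx2.le
    refine measure_mono_null hsub ?_
    rw [← (show Set.Iic b \ Set.Iic (s:ℝ) = Set.Ioc (s:ℝ) b by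
        ext x; simp only [Set.mem_diff, Set.mem_Iic, Set.mem_Ioc, not_le]; exact and_comm),
      measure_diff (Set.Iic_subset_Iic.mpr hsb) nullMeasurableSet_Iic (measure_ne_top μ _),
      measure_Iic_eq' hFcdf, measure_Iic_eq' hFcdf, hFb, tsub_self]

def goodSet (F : ℝ → ℝ) : Set ℝ :=
  {x | 0 < F x} ∩ {x | F x < 1} ∩ (⋃ s : ℚ, Set.Ioi (s:ℝ) ∩ F ⁻¹' {F s})ᶜ

omit hFcdf in
include hFcont in
lemma goodSet_measurable : MeasurableSet (goodSet F) := by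
  refine MeasurableSet.inter (MeasurableSet.inter ?_ ?_) (MeasurableSet.compl ?_)
  · exact (isOpen_lt continuous_const hFcont).measurableSet
  · exact (isOpen_lt hFcont continuous_const).measurableSet
  · exact MeasurableSet.iUnion fun s =>
      measurableSet_Ioi.inter (hFcont.measurable (measurableSet_singleton _))

include hFcont in
lemma goodSet_compl_null : μ (goodSet F)ᶜ = 0 := by
  unfold goodSet
  rw [Set.compl_inter, Set.compl_inter, compl_compl]
  refine measure_union_null (measure_union_null ?_ ?_) ?_
  · refine measure_mono_null ?_ (null_N0' hFcdf hFcont)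
    intro x hx
    simp only [Set.mem_compl_iff, Set.mem_setOf_eq, not_lt] at hx
    exact hx
  · refine measure_mono_null ?_ (null_N1' hFcdf hFcont)
    intro x hx
    simp only [Set.mem_compl_iff, Set.mem_setOf_eq, not_lt] at hx
    exact hx
  · exact measure_iUnion_null fun s => null_flat' hFcdf hFcont s

omit hFcdf in
lemma goodSet_spec (hmono : Monotone F) {x : ℝ} (hx : x ∈ goodSet F) :
    0 < F x ∧ F x < 1 ∧ ∀ t, F x ≤ F t → x ≤ t := by
  obtain ⟨⟨hx1, hx2⟩, hx3⟩ := hx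
  refine ⟨hx1, hx2, fun t ht => ?_⟩
  by_contra h
  push_neg at h
  have hFt : F t = F x := le_antisymm (hmono h.le) ht
  obtain ⟨s, hs1, hs2⟩ := exists_rat_btwn h
  have hFs : F s = F x := le_antisymm (hmono hs2.le) (hFt ▸ hmono hs1.le)
  exact hx3 (Set.mem_iUnion.mpr ⟨s, hs2, by simp [hFs]⟩)

include hFcont in
lemma map_F_eq' (hF : Measurable F) :
    Measure.map F μ = volume.restrict (Set.Icc (0:ℝ) 1) := by
  haveI : IsProbabilityMeasure (Measure.map F μ) := Measure.isProbabilityMeasure_map hF.aemeasurable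
  haveI : IsProbabilityMeasure (volume.restrict (Set.Icc (0:ℝ) 1)) := by
    constructor
    rw [Measure.restrict_apply_univ, Real.volume_Icc]
    norm_num
  refine Measure.ext_of_Iic _ _ fun c => ?_
  rw [Measure.map_apply hF measurableSet_Iic, Measure.restrict_apply measurableSet_Iic]
  rcases lt_or_ge c 0 with hc | hc0
  · have h1 : F ⁻¹' Set.Iic c = ∅ := by
      ext t
      simp only [Set.mem_preimage, Set.mem_Iic, Set.mem_empty_iff_false, iff_false, not_le]
      exact lt_of_lt_of_le hc (F_nonneg' hFcdf t)
    have h2 : Set.Iic c ∩ Set.Icc (0:ℝ) 1 = ∅ := by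
      apply Set.eq_empty_iff_forall_notMem.mpr
      rintro t ⟨ht1, ht2⟩
      rw [Set.mem_Iic] at ht1
      rw [Set.mem_Icc] at ht2
      linarith [ht2.1]
    rw [h1, h2, measure_empty, measure_empty]
  rcases le_or_gt 1 c with hc1 | hc1
  · have h1 : F ⁻¹' Set.Iic c = Set.univ := by
      ext t
      simp only [Set.mem_preimage, Set.mem_Iic, Set.mem_univ, iff_true]
      exact le_trans (F_le_one' hFcdf t) hc1
    have h2 : Set.Iic c ∩ Set.Icc (0:ℝ) 1 = Set.Icc 0 1 := by
      apply Set.inter_eq_self_of_subset_right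
      intro t ht
      exact le_trans ht.2 hc1
    rw [h1, h2, measure_univ, Real.volume_Icc]
    norm_num
  · have h2 : Set.Iic c ∩ Set.Icc (0:ℝ) 1 = Set.Icc 0 c := by
      ext t
      simp only [Set.mem_inter_iff, Set.mem_Iic, Set.mem_Icc]
      constructor
      · rintro ⟨ht1, ht2, _⟩; exact ⟨ht2, ht1⟩
      · rintro ⟨ht1, ht2⟩; exact ⟨ht2, ht1, le_trans ht2 hc1.le⟩
    rw [h2, Real.volume_Icc]
    rcases eq_or_lt_of_le hc0 with hc0' | hc0'
    · have h1 : μ (F ⁻¹' Set.Iic c) = 0 := by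
        refine measure_mono_null ?_ (null_N0' hFcdf hFcont)
        intro t ht
        simp only [Set.mem_preimage, Set.mem_Iic] at ht
        simp only [Set.mem_setOf_eq]
        rw [← hc0'] at ht
        exact ht
      rw [h1, ← hc0']
      norm_num
    · set b := sSup {t | F t ≤ c} with hb
      have hFb : F b = c :=
        F_csSup_level (F_mono' hFcdf) hFcont (F_bot' hFcdf) (F_top' hFcdf) hc0' hc1
      have h1 : F ⁻¹' Set.Iic c = Set.Iic b := by
        ext t
        simp only [Set.mem_preimage, Set.mem_Iic]
        constructor
        · intro ht
          exact le_csSup (level_bddAbove (F_mono' hFcdf) (F_top' hFcdf) hc0 hc1) ht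
        · intro ht
          calc F t ≤ F b := F_mono' hFcdf ht
            _ = c := hFb
      rw [h1, measure_Iic_eq' hFcdf, hFb, sub_zero]

end MeasSide

lemma Ucdf_lip {a b : ℝ} (hab : a ≤ b) : Ucdf b - Ucdf a ≤ b - a := by
  unfold Ucdf
  simp only [max_def, min_def]
  split_ifs <;> linarith

lemma min_le_min_add {a b b' e : ℝ} (he : 0 ≤ e) (h : b' ≤ b + e) :
    min a b' ≤ min a b + e := by
  rcases le_total a b with hab | hab
  · rw [min_eq_left hab]
    exact le_trans (min_le_left _ _) (le_add_of_nonneg_right he)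
  · rw [min_eq_right hab]
    exact le_trans (min_le_right _ _) h

lemma empD_right_const (n : ℕ) (y : Fin n → ℝ) (x0 : ℝ) :
    ∃ δ > 0, ∀ t, x0 ≤ t → t ≤ x0 + δ → empD n y t = empD n y x0 := by
  classical
  by_cases hne : (Finset.univ.filter (fun j => x0 < y j)).Nonempty
  · set m := (Finset.univ.filter (fun j => x0 < y j)).inf' hne y with hm
    have hx0m : x0 < m := by
      rw [hm, Finset.lt_inf'_iff]
      intro j hj
      exact (Finset.mem_filter.mp hj).2
    refine ⟨(m - x0)/2, by linarith, fun t ht1 ht2 => ?_⟩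
    unfold empD
    congr 1
    refine Finset.sum_congr rfl fun j _ => ?_
    rcases le_or_gt (y j) x0 with h | h
    · rw [if_pos (le_trans h ht1), if_pos h]
    · have hmj : m ≤ y j := by
        rw [hm]
        exact Finset.inf'_le _ (Finset.mem_filter.mpr ⟨Finset.mem_univ j, h⟩)
      rw [if_neg (by linarith), if_neg (by linarith)]
  · refine ⟨1, one_pos, fun t ht1 _ => ?_⟩
    unfold empD
    congr 1
    refine Finset.sum_congr rfl fun j _ => ?_
    have h : y j ≤ x0 := by
      by_contra h
      push_neg at h
      exact hne ⟨j, Finset.mem_filter.mpr ⟨Finset.mem_univ j, h⟩⟩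
    rw [if_pos (le_trans h ht1), if_pos h]

noncomputable def vOf (q : ℕ) (hq : 1 ≤ q) (c : Fin q → ℚ) : ℕ → ℝ :=
  fun i => (c ⟨min (i-1) (q-1), (Nat.min_le_right _ _).trans_lt (by omega)⟩ : ℝ)

lemma vOf_monotoneOn {q : ℕ} (hq : 1 ≤ q) {c : Fin q → ℚ} (hc : Monotone c) :
    MonotoneOn (vOf q hq c) (Set.Icc 1 q) := by
  intro a ha b hb hab
  unfold vOf
  have h : ((a-1) ⊓ (q-1)) ≤ ((b-1) ⊓ (q-1)) :=
    inf_le_inf (Nat.sub_le_sub_right hab 1) le_rfl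
  exact_mod_cast hc (Fin.mk_le_mk.mpr h)

lemma sInf_S_eq_iInf {q n : ℕ} (hq : 1 ≤ q) (hn : 0 < n) (y : Fin n → ℝ) :
    sInf {r | ∃ v : ℕ → ℝ, MonotoneOn v (Set.Icc 1 q) ∧ r = rFG q (empD n y) Ucdf v}
      = ⨅ c : {c : Fin q → ℚ // Monotone c},
          rFG q (empD n y) Ucdf (vOf q hq c.1) := by
  haveI : Nonempty {c : Fin q → ℚ // Monotone c} := ⟨⟨fun _ => 0, monotone_const⟩⟩
  set S := {r | ∃ v : ℕ → ℝ, MonotoneOn v (Set.Icc 1 q) ∧ r = rFG q (empD n y) Ucdf v} with hS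
  have hne : S.Nonempty := ⟨_, (fun _ => (0:ℝ)), monotoneOn_const, rfl⟩
  have hbdd : BddBelow S := by
    refine ⟨0, ?_⟩
    rintro r ⟨v, hv, rfl⟩
    exact rFG_nonneg hq (empD_nonneg n _) (empD_le_one hn _) (empD_mono _)
      Ucdf_nonneg Ucdf_le_one Ucdf_mono hv
  have hbddr : BddBelow (Set.range fun c : {c : Fin q → ℚ // Monotone c} =>
      rFG q (empD n y) Ucdf (vOf q hq c.1)) := by
    refine ⟨0, ?_⟩
    rintro r ⟨c, rfl⟩
    exact rFG_nonneg hq (empD_nonneg n _) (empD_le_one hn _) (empD_mono _)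
      Ucdf_nonneg Ucdf_le_one Ucdf_mono (vOf_monotoneOn hq c.2)
  refine le_antisymm (le_ciInf fun c => csInf_le hbdd ⟨vOf q hq c.1, vOf_monotoneOn hq c.2, rfl⟩) ?_
  refine le_csInf hne ?_
  rintro r ⟨v, hv, rfl⟩
  refine le_of_forall_pos_le_add fun η hη => ?_
  have hδs : ∀ i : ℕ, ∃ δ > 0, ∀ t, v i ≤ t → t ≤ v i + δ → empD n y t = empD n y (v i) :=
    fun i => empD_right_const n y (v i)
  choose d hd0 hdc using hδs
  have hIccne : (Finset.Icc 1 q).Nonempty := ⟨1, Finset.mem_Icc.mpr ⟨le_rfl, hq⟩⟩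
  set D := (Finset.Icc 1 q).inf' hIccne d with hD
  have hD0 : 0 < D := by
    rw [hD, Finset.lt_inf'_iff]
    exact fun i _ => hd0 i
  set ε := min (D / (q+1)) (η / ((q+1)^2)) with hε
  have hq1 : (0:ℝ) < (q:ℝ) + 1 := by positivity
  have hε0 : 0 < ε := lt_min (by positivity) (by positivity)
  have hεD : ((q:ℝ)+1) * ε ≤ D := by
    have : ε ≤ D / (q+1) := min_le_left _ _
    calc ((q:ℝ)+1) * ε ≤ ((q:ℝ)+1) * (D / (q+1)) := by nlinarith
      _ = D := by field_simp
  have hεη : ((q:ℝ)+1) * (((q:ℝ)+1) * ε) ≤ η := by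
    have h1 : ε ≤ η / ((q+1)^2) := min_le_right _ _
    have h2 : ((q:ℝ)+1)^2 * ε ≤ η := by
      calc ((q:ℝ)+1)^2 * ε ≤ ((q:ℝ)+1)^2 * (η / ((q+1)^2)) := by nlinarith
        _ = η := by field_simp
    nlinarith
  have hcex : ∀ j : Fin q, ∃ cj : ℚ,
      v ((j:ℕ)+1) + (j:ℕ)*ε < cj ∧ (cj:ℝ) < v ((j:ℕ)+1) + ((j:ℕ)+1)*ε := by
    intro j
    apply exists_rat_btwn
    have : ((j:ℕ):ℝ) * ε < (((j:ℕ):ℝ)+1) * ε :=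
      mul_lt_mul_of_pos_right (by linarith) hε0
    push_cast
    linarith
  choose cf hc1 hc2 using hcex
  have hcmono : Monotone cf := by
    intro j k hjk
    rcases eq_or_lt_of_le hjk with h | h
    · rw [h]
    · have hjk1 : (j:ℕ) + 1 ≤ (k:ℕ) := h
      have hjlt := j.isLt
      have hklt := k.isLt
      have hv1 : v ((j:ℕ)+1) ≤ v ((k:ℕ)+1) := by
        apply hv (Set.mem_Icc.mpr ⟨by omega, by omega⟩) (Set.mem_Icc.mpr ⟨by omega, by omega⟩)
        omega
      have : (cf j : ℝ) < cf k := by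
        calc (cf j : ℝ) < v ((j:ℕ)+1) + ((j:ℕ)+1)*ε := hc2 j
          _ ≤ v ((k:ℕ)+1) + ((j:ℕ)+1)*ε := by linarith
          _ ≤ v ((k:ℕ)+1) + (k:ℕ)*ε := by
              have : (((j:ℕ):ℝ)+1) ≤ ((k:ℕ):ℝ) := by exact_mod_cast hjk1
              nlinarith
          _ < cf k := hc1 k
      exact_mod_cast this.le
  set C : {c : Fin q → ℚ // Monotone c} := ⟨cf, hcmono⟩ with hC
  refine le_trans (ciInf_le hbddr C) ?_
  -- now bound rFG (vOf cf) ≤ rFG v + η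
  have hvb : ∀ i, 1 ≤ i → i ≤ q →
      v i ≤ vOf q hq cf i ∧ vOf q hq cf i ≤ v i + ((q:ℝ)+1)*ε := by
    intro i h1 h2
    set j : Fin q := ⟨min (i-1) (q-1), (Nat.min_le_right _ _).trans_lt (by omega)⟩ with hj
    have hvO : vOf q hq cf i = (cf j : ℝ) := rfl
    rw [hvO]
    have hji : (j:ℕ) + 1 = i := by
      have hc' : (j:ℕ) = min (i-1) (q-1) := rfl
      rw [hc', Nat.min_eq_left (by omega)]
      omega
    have hb1 := hc1 j
    have hb2 := hc2 j
    rw [hji] at hb1 hb2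
    constructor
    · have : (0:ℝ) ≤ ((j:ℕ):ℝ) * ε := by positivity
      linarith
    · have : ((j:ℕ):ℝ) + 1 ≤ (q:ℝ) + 1 := by
        have : ((j:ℕ):ℝ) ≤ (q:ℝ) := by exact_mod_cast (by omega : (j:ℕ) ≤ q)
        linarith
      nlinarith
  have hempeq : ∀ i, 1 ≤ i → i ≤ q → empD n y (vOf q hq cf i) = empD n y (v i) := by
    intro i h1 h2
    refine hdc i _ (hvb i h1 h2).1 ?_
    have hDd : D ≤ d i := by
      rw [hD]
      exact Finset.inf'_le _ (Finset.mem_Icc.mpr ⟨h1, h2⟩)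
    have := (hvb i h1 h2).2
    linarith
  have hUd : ∀ i, i ≤ q + 1 →
      0 ≤ dext q Ucdf (vOf q hq cf) i - dext q Ucdf v i ∧
      dext q Ucdf (vOf q hq cf) i - dext q Ucdf v i ≤ ((q:ℝ)+1)*ε := by
    intro i hi
    by_cases h0 : i = 0
    · subst h0; rw [dext_zero, dext_zero]
      refine ⟨by norm_num, by norm_num; positivity⟩
    by_cases h1 : i = q + 1
    · subst h1; rw [dext_top, dext_top]
      refine ⟨by norm_num, by norm_num; positivity⟩
    have hi1 : 1 ≤ i := by omega
    have hi2 : i ≤ q := by omega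
    rw [dext_mid q Ucdf _ hi1 hi2, dext_mid q Ucdf _ hi1 hi2]
    obtain ⟨hl, hr⟩ := hvb i hi1 hi2
    constructor
    · exact sub_nonneg.mpr (Ucdf_mono hl)
    · calc Ucdf (vOf q hq cf i) - Ucdf (v i) ≤ vOf q hq cf i - v i := Ucdf_lip hl
        _ ≤ ((q:ℝ)+1)*ε := by linarith
  have hAeq : ∀ i, i ≤ q + 1 →
      dext q (empD n y) (vOf q hq cf) i = dext q (empD n y) v i :=
    fun i hi => dext_eq_of (fun i hi1 hi2 => hempeq i hi1 hi2) hi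
  calc rFG q (empD n y) Ucdf (vOf q hq C.1)
      ≤ ∑ i ∈ Finset.range (q+1),
        (min (dext q (empD n y) v (i+1) - dext q (empD n y) v i)
          (dext q Ucdf v (i+1) - dext q Ucdf v i) + ((q:ℝ)+1)*ε) := by
        refine Finset.sum_le_sum fun i hi => ?_
        rw [Finset.mem_range] at hi
        show min _ _ ≤ _
        rw [hAeq (i+1) (by omega), hAeq i (by omega)]
        refine min_le_min_add (by positivity) ?_
        have h1 := hUd (i+1) (by omega)
        have h2 := hUd i (by omega)
        linarith [h1.2, h2.1]
    _ = rFG q (empD n y) Ucdf v + ((q:ℕ)+1 : ℕ) * (((q:ℝ)+1)*ε) := by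
        rw [Finset.sum_add_distrib, Finset.sum_const, Finset.card_range, nsmul_eq_mul]
        rfl
    _ ≤ rFG q (empD n y) Ucdf v + η := by
        have : (((q:ℕ)+1 : ℕ) : ℝ) = (q:ℝ)+1 := by push_cast; ring
        rw [this]
        linarith [hεη]

lemma measurable_dext_eval (q n : ℕ) (v : ℕ → ℝ) (i : ℕ) :
    Measurable (fun y : Fin n → ℝ => dext q (empD n y) v i) := by
  unfold dext
  split_ifs
  · exact measurable_const
  · exact measurable_const
  · unfold empD
    refine Measurable.div_const ?_ _
    refine Finset.measurable_sum _ fun j _ => ?_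
    refine Measurable.ite ?_ measurable_const measurable_const
    exact measurableSet_le (measurable_pi_apply j) measurable_const

lemma measurable_stat {q n : ℕ} (hq : 1 ≤ q) (hn : 0 < n) :
    Measurable (fun y : Fin n → ℝ => Dq q (empD n y) Ucdf) := by
  have hrw : (fun y : Fin n → ℝ => Dq q (empD n y) Ucdf)
      = fun y => 1 - ⨅ c : {c : Fin q → ℚ // Monotone c},
          rFG q (empD n y) Ucdf (vOf q hq c.1) := by
    funext y
    unfold Dq
    rw [sInf_S_eq_iInf hq hn y]
  rw [hrw]
  refine measurable_const.sub (Measurable.iInf fun c => ?_)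
  unfold rFG
  refine Finset.measurable_sum _ fun i _ => Measurable.min ?_ ?_
  · exact (measurable_dext_eval q n _ (i+1)).sub (measurable_dext_eval q n _ i)
  · exact measurable_const

lemma map_eq_pi {Ω : Type*} [MeasurableSpace Ω] (P : Measure Ω) [IsProbabilityMeasure P] {n : ℕ}
    (Y : Fin n → Ω → ℝ) (hm : ∀ i, Measurable (Y i))
    (hind : ProbabilityTheory.iIndepFun Y P) :
    Measure.map (fun ω i => Y i ω) P = Measure.pi (fun i => Measure.map (Y i) P) := by
  haveI : ∀ i, IsProbabilityMeasure (Measure.map (Y i) P) :=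
    fun i => Measure.isProbabilityMeasure_map (hm i).aemeasurable
  refine (Measure.pi_eq fun s hs => ?_).symm
  rw [Measure.map_apply (measurable_pi_lambda _ hm) (MeasurableSet.univ_pi hs)]
  have hpre : (fun ω i => Y i ω) ⁻¹' (Set.univ.pi s) = ⋂ i ∈ Finset.univ, Y i ⁻¹' s i := by
    ext ω
    simp [Set.mem_univ_pi]
  rw [hpre, hind.measure_inter_preimage_eq_mul Finset.univ (fun i _ => hs i)]
  exact Finset.prod_congr rfl fun i _ => (Measure.map_apply (hm i) (hs i)).symm

end DqAux

/-- For every continuous distribution function F, the law of D_q(F_n, F)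
(for n i.i.d. samples from F) is the same, namely the law of D_q(U_n, U)
for n i.i.d. standard uniform samples. -/
theorem Dq_distribution_free
    {Ω : Type*} [MeasurableSpace Ω] (P : Measure Ω) [IsProbabilityMeasure P]
    {Ω' : Type*} [MeasurableSpace Ω'] (P' : Measure Ω') [IsProbabilityMeasure P']
    (μ : Measure ℝ) [IsProbabilityMeasure μ] (F : ℝ → ℝ)
    (hFcdf : ∀ x, F x = (μ (Set.Iic x)).toReal) (hFcont : Continuous F)
    (n : ℕ) (hn : 0 < n)
    (X : Fin n → Ω → ℝ) (hXmeas : ∀ i, Measurable (X i))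
    (hXindep : iIndepFun X P)
    (hXdist : ∀ i, Measure.map (X i) P = μ)
    (W : Fin n → Ω' → ℝ) (hWmeas : ∀ i, Measurable (W i))
    (hWindep : iIndepFun W P')
    (hWdist : ∀ i, Measure.map (W i) P' = volume.restrict (Set.Icc 0 1))
    (q : ℕ) (hq : 1 ≤ q) :
    Measure.map (fun ω => Dq q (empOf n X ω) F) P =
      Measure.map (fun ω => Dq q (empOf n W ω) Ucdf) P' := by
  classical
  have hmono := DqAux.F_mono' hFcdf
  have h0 := DqAux.F_nonneg' hFcdf
  have h1 := DqAux.F_le_one' hFcdf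
  have hFmeas : Measurable F := hFcont.measurable
  have hng : ∀ᵐ ω ∂P, ∀ j : Fin n, X j ω ∈ DqAux.goodSet F := by
    rw [MeasureTheory.ae_all_iff]
    intro j
    have hms : MeasurableSet (DqAux.goodSet F) := DqAux.goodSet_measurable hFcont
    rw [MeasureTheory.ae_iff]
    have hpre : {ω | ¬ X j ω ∈ DqAux.goodSet F} = X j ⁻¹' (DqAux.goodSet F)ᶜ := rfl
    rw [hpre, ← Measure.map_apply (hXmeas j) hms.compl, hXdist j]
    exact DqAux.goodSet_compl_null hFcdf hFcont
  have heq : (fun ω => Dq q (empOf n X ω) F)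
      =ᵐ[P] (fun y : Fin n → ℝ => Dq q (DqAux.empD n y) Ucdf) ∘ (fun ω j => F (X j ω)) := by
    refine hng.mono fun ω hω => ?_
    have hgs := fun j => DqAux.goodSet_spec hmono (hω j)
    have hkey := DqAux.sInf_SX_eq (F := F) hmono hFcont h0 h1 (DqAux.F_bot' hFcdf)
      (DqAux.F_top' hFcdf) hq hn (fun j => X j ω) (fun j => (hgs j).1)
      (fun j => (hgs j).2.1) (fun j t => (hgs j).2.2 t)
    show Dq q (DqAux.empD n (fun j => X j ω)) F
      = Dq q (DqAux.empD n (fun j => F (X j ω))) Ucdf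
    unfold Dq
    rw [hkey]
  rw [Measure.map_congr heq]
  have hYm : Measurable (fun ω (j : Fin n) => F (X j ω)) :=
    measurable_pi_lambda _ fun j => hFmeas.comp (hXmeas j)
  have hWm : Measurable (fun ω' (j : Fin n) => W j ω') :=
    measurable_pi_lambda _ fun j => hWmeas j
  have hg := DqAux.measurable_stat (n := n) hq hn
  rw [← Measure.map_map hg hYm]
  have hmapY : Measure.map (fun ω (j : Fin n) => F (X j ω)) P
      = Measure.pi (fun _ : Fin n => volume.restrict (Set.Icc (0:ℝ) 1)) := by
    have hcomp : iIndepFun (fun j => F ∘ X j) P :=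
      hXindep.comp (fun _ => F) (fun _ => hFmeas)
    have hmain : Measure.map (fun ω (j : Fin n) => F (X j ω)) P
        = Measure.pi (fun i => Measure.map (F ∘ X i) P) :=
      DqAux.map_eq_pi P (fun j => F ∘ X j) (fun j => hFmeas.comp (hXmeas j)) hcomp
    rw [hmain]
    congr 1
    funext j
    rw [← Measure.map_map hFmeas (hXmeas j), hXdist j]
    exact DqAux.map_F_eq' hFcdf hFcont hFmeas
  have hmapW : Measure.map (fun ω' (j : Fin n) => W j ω') P'
      = Measure.pi (fun _ : Fin n => volume.restrict (Set.Icc (0:ℝ) 1)) := by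
    rw [DqAux.map_eq_pi P' W hWmeas hWindep]
    congr 1
    funext j
    exact hWdist j
  rw [hmapY, ← hmapW, Measure.map_map hg hWm]
  rfl
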